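/- Let u be a partial transformation of a finite set Ω and G a group of permutations of Ω. If there exists g ∈ G with rank(u∘g∘u) = rank(u), then u is regular in the semigroup ⟨G,u⟩, i.e., there exists b ∈ ⟨G,u⟩ with u = u∘b∘u. -/

import Mathlib

variable {Ω : Type*} [Fintype Ω] [DecidableEq Ω]

/-- A partial transformation of `Ω`, encoded as a function `Ω → Option Ω`. -/
def PT (Ω : Type*) := Ω → Option Ω

/-- Composition of partial transformations: apply `f` first, then `g`. -/
def pcomp (f g : PT Ω) : PT Ω := fun x => (f x).bind g

/-- A permutation viewed as a (total) partial transformation. -/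
def ofPerm (g : Equiv.Perm Ω) : PT Ω := fun x => some (g x)

/-- The rank of a partial transformation: the cardinality of its image. -/
noncomputable def rank (u : PT Ω) : ℕ := {y : Ω | ∃ x : Ω, u x = some y}.ncard

/-- The domain of a partial transformation. -/
def dom (u : PT Ω) : Set Ω := {x : Ω | u x ≠ none}

/-- Membership in the subsemigroup of `PT Ω` generated by a set `S`. -/
inductive InGen (S : Set (PT Ω)) : PT Ω → Prop
  | base {s : PT Ω} : s ∈ S → InGen S s
  | mul {a b : PT Ω} : InGen S a → InGen S b → InGen S (pcomp a b)

/-- The generating set consisting of the permutations of `G` together with `t`. -/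
def gens (G : Subgroup (Equiv.Perm Ω)) (t : PT Ω) : Set (PT Ω) :=
  {f : PT Ω | (∃ g ∈ G, f = ofPerm g) ∨ f = t}

theorem pcomp_assoc (a b c : PT Ω) : pcomp (pcomp a b) c = pcomp a (pcomp b c) := by
  funext x
  simp [pcomp, Option.bind_assoc]
  cases a x <;> rfl

/-- Iterated left composition: `fpow f n = f ∘ f ∘ ⋯ ∘ f` (n times), identity for `n = 0`. -/
def fpow (f : PT Ω) : ℕ → PT Ω
  | 0 => fun x => some x
  | n + 1 => pcomp f (fpow f n)

theorem fpow_zero_eq (f : PT Ω) : fpow f 0 = ofPerm 1 := by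
  funext x
  rfl

theorem fpow_inGen (S : Set (PT Ω)) (f : PT Ω) (hf : InGen S f) (h1 : ofPerm (1 : Equiv.Perm Ω) ∈ S) :
    ∀ n : ℕ, InGen S (fpow f n)
  | 0 => by rw [fpow_zero_eq]; exact InGen.base h1
  | n + 1 => InGen.mul hf (fpow_inGen S f hf h1 n)

theorem rank_eq_implies_regular (G : Subgroup (Equiv.Perm Ω)) (u : PT Ω)
    (h : ∃ g ∈ G, rank (pcomp (pcomp u (ofPerm g)) u) = rank u) :
    ∃ b : PT Ω, InGen (gens G u) b ∧ u = pcomp (pcomp u b) u := by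
  obtain ⟨g, hgG, hrank⟩ := h
  set f : PT Ω := pcomp u (ofPerm g) with hf
  set S : Set Ω := {y | ∃ x, u x = some y} with hS
  set T : Set Ω := {y | ∃ x, f x = some y} with hT
  set R : Set Ω := {y | ∃ x, pcomp f u x = some y} with hR
  have hrank' : R.ncard = S.ncard := hrank
  -- basic facts about f
  have hfx : ∀ x y, u x = some y → f x = some (g y) := by
    intro x y hxy
    simp [hf, pcomp, ofPerm, hxy]; rfl
  have hfx' : ∀ x z, f x = some z → ∃ y, u x = some y ∧ z = g y := by
    intro x z hxz
    replace hxz := Option.bind_eq_some_iff.mp (show (u x).bind (ofPerm g) = some z from hxz)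
    obtain ⟨y, hy, hz⟩ := hxz
    exact ⟨y, hy, (Option.some_inj.mp hz).symm⟩
  have hfnone : ∀ x, u x = none → f x = none := by
    intro x hx
    simp [hf, pcomp, hx]; rfl
  -- T = g '' S
  have hTS : T = g '' S := by
    ext z
    constructor
    · rintro ⟨x, hx⟩
      obtain ⟨y, hy, rfl⟩ := hfx' x z hx
      exact ⟨y, ⟨x, hy⟩, rfl⟩
    · rintro ⟨y, ⟨x, hx⟩, rfl⟩
      exact ⟨x, hfx x y hx⟩
  have hTcard : T.ncard = S.ncard := by
    rw [hTS]
    exact Set.ncard_image_of_injective S g.injective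
  -- R ⊆ S
  have hRsubS : R ⊆ S := by
    rintro y ⟨x, hx⟩
    replace hx := Option.bind_eq_some_iff.mp (show (f x).bind u = some y from hx)
    obtain ⟨z, _, hz⟩ := hx
    exact ⟨z, hz⟩
  have hRS : R = S :=
    Set.eq_of_subset_of_ncard_le hRsubS (le_of_eq hrank'.symm) (Set.toFinite S)
  -- the total function extending u
  set U : Ω → Ω := fun z => (u z).getD z with hU
  have hUspec : ∀ z, z ∈ dom u → u z = some (U z) := by
    intro z hz
    simp only [dom, Set.mem_setOf_eq] at hz
    cases hzc : u z with
    | none => exact absurd hzc hz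
    | some w => simp [hU, hzc]
  -- R = U '' (T ∩ dom u)
  have hRimg : R = U '' (T ∩ dom u) := by
    ext y
    constructor
    · rintro ⟨x, hx⟩
      replace hx := Option.bind_eq_some_iff.mp (show (f x).bind u = some y from hx)
      obtain ⟨z, hz1, hz2⟩ := hx
      have hzdom : z ∈ dom u := by simp [dom, hz2]
      refine ⟨z, ⟨⟨x, hz1⟩, hzdom⟩, ?_⟩
      have := hUspec z hzdom
      rw [hz2] at this
      exact (Option.some_inj.mp this).symm
    · rintro ⟨z, ⟨⟨x, hx⟩, hzdom⟩, rfl⟩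
      refine ⟨x, ?_⟩
      exact Option.bind_eq_some_iff.mpr ⟨z, hx, hUspec z hzdom⟩
  -- T ⊆ dom u
  have hTdom : T ⊆ dom u := by
    have h1 : R.ncard ≤ (T ∩ dom u).ncard := by
      rw [hRimg]; exact Set.ncard_image_le (Set.toFinite _)
    have h2 : (T ∩ dom u).ncard ≤ T.ncard :=
      Set.ncard_le_ncard Set.inter_subset_left (Set.toFinite T)
    have h3 : T.ncard ≤ (T ∩ dom u).ncard := by omega
    have : T ∩ dom u = T :=
      (Set.eq_of_subset_of_ncard_le Set.inter_subset_left h3 (Set.toFinite T))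
    rw [← this]
    exact Set.inter_subset_right
  -- the induced map ρ on S
  set ρ : Ω → Ω := fun y => (u (g y)).getD y with hρdef
  have hρ : ∀ y ∈ S, u (g y) = some (ρ y) := by
    intro y hy
    obtain ⟨x, hx⟩ := hy
    have hgyT : g y ∈ T := ⟨x, hfx x y hx⟩
    have := hUspec (g y) (hTdom hgyT)
    rw [this]
    simp [hρdef, hU]
    cases hc : u (g y) with
    | none => exact absurd hc (hTdom hgyT)
    | some w => rw [hc] at this; simp_all
  have hρS : ∀ y ∈ S, ρ y ∈ S := fun y hy => ⟨g y, hρ y hy⟩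
  have hρiterS : ∀ n, ∀ y ∈ S, ρ^[n] y ∈ S := by
    intro n
    induction n with
    | zero => intro y hy; simpa using hy
    | succ n ih =>
      intro y hy
      rw [Function.iterate_succ_apply]
      exact ih _ (hρS y hy)
  -- ρ is surjective on S
  have hρsurj : ∀ y ∈ S, ∃ w ∈ S, ρ w = y := by
    intro y hy
    rw [← hRS] at hy
    obtain ⟨x, hx⟩ := hy
    replace hx := Option.bind_eq_some_iff.mp (show (f x).bind u = some y from hx)
    obtain ⟨z, hz1, hz2⟩ := hx
    obtain ⟨w, hw, rfl⟩ := hfx' x z hz1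
    have hwS : w ∈ S := ⟨x, hw⟩
    have := hρ w hwS
    rw [hz2] at this
    exact ⟨w, hwS, (Option.some_inj.mp this).symm⟩
  -- turn ρ into a permutation of the finite set S
  have hSfin : Finite S := (Set.toFinite S).to_subtype
  set F : S → S := fun y => ⟨ρ y, hρS y y.2⟩ with hF
  have hFsurj : Function.Surjective F := by
    rintro ⟨y, hy⟩
    obtain ⟨w, hwS, hw⟩ := hρsurj y hy
    exact ⟨⟨w, hwS⟩, Subtype.ext hw⟩
  have hFbij : Function.Bijective F := Finite.surjective_iff_bijective.mp hFsurj
  set e : Equiv.Perm S := Equiv.ofBijective F hFbij with he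
  have hepow : ∀ n (y : S), (((e ^ n) y : S) : Ω) = ρ^[n] (y : Ω) := by
    intro n
    induction n with
    | zero => intro y; simp
    | succ n ih =>
      intro y
      rw [pow_succ', Equiv.Perm.mul_apply, Function.iterate_succ_apply']
      have h1 : ((e ((e ^ n) y) : S) : Ω) = ρ (((e ^ n) y : S) : Ω) := rfl
      rw [h1, ih y]
  set k : ℕ := orderOf e with hk
  have hkpos : 0 < k := orderOf_pos e
  have hek : e ^ k = 1 := pow_orderOf_eq_one e
  have hperiod : ∀ y ∈ S, ρ^[k] y = y := by
    intro y hy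
    have := hepow k ⟨y, hy⟩
    rw [hek] at this
    simpa using this.symm
  -- evaluation of powers of f
  have hfpow_none : ∀ n x, u x = none → fpow f (n + 1) x = none := by
    intro n x hx
    show (f x).bind (fpow f n) = none
    rw [hfnone x hx]
    rfl
  have hfpow_some : ∀ n, ∀ x y, u x = some y → fpow f (n + 1) x = some (g (ρ^[n] y)) := by
    intro n
    induction n with
    | zero =>
      intro x y hxy
      show (f x).bind (fpow f 0) = some (g (ρ^[0] y))
      rw [hfx x y hxy]
      rfl
    | succ n ih =>
      intro x y hxy
      have hyS : y ∈ S := ⟨x, hxy⟩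
      show (f x).bind (fpow f (n + 1)) = some (g (ρ^[n + 1] y))
      rw [hfx x y hxy]
      have : (some (g y)).bind (fpow f (n + 1)) = fpow f (n + 1) (g y) := rfl
      rw [this, ih (g y) (ρ y) (hρ y hyS), Function.iterate_succ_apply]
  -- assemble b
  refine ⟨pcomp (ofPerm g) (fpow f (k - 1)), ?_, ?_⟩
  · refine InGen.mul (InGen.base (Or.inl ⟨g, hgG, rfl⟩)) ?_
    refine fpow_inGen _ f ?_ (Or.inl ⟨1, G.one_mem, rfl⟩) _
    exact InGen.mul (InGen.base (Or.inr rfl)) (InGen.base (Or.inl ⟨g, hgG, rfl⟩))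
  · have hub : pcomp u (pcomp (ofPerm g) (fpow f (k - 1))) = fpow f k := by
      rw [← pcomp_assoc, ← hf]
      have : k = (k - 1) + 1 := by omega
      rw [this]
      rfl
    rw [hub]
    funext x
    show u x = (fpow f k x).bind u
    cases hux : u x with
    | none =>
      have : k = (k - 1) + 1 := by omega
      rw [this, hfpow_none (k - 1) x hux]
      rfl
    | some y =>
      have hyS : y ∈ S := ⟨x, hux⟩
      have hk1 : k = (k - 1) + 1 := by omega
      rw [hk1, hfpow_some (k - 1) x y hux]
      have hmem : ρ^[k - 1] y ∈ S := hρiterS _ y hyS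
      have : (some (g (ρ^[k - 1] y))).bind u = u (g (ρ^[k - 1] y)) := rfl
      rw [this, hρ _ hmem, ← Function.iterate_succ_apply' ρ (k - 1) y]
      have hk2 : (k - 1).succ = k := by omega
      rw [hk2, hperiod y hyS]
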